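/- Let T be a compact positive self-adjoint operator on a Hilbert space H with spectral decomposition T = Σ λ_j² ⟨·,e_j⟩ e_j. For ψ ∈ H, the vectors (Id + ρT)⁻¹ψ converge as ρ → ∞ to the orthogonal projection of ψ onto ker(T). -/

import Mathlib

open RealInnerProductSpace

private lemma aux_isUnit {H : Type*} [NormedAddCommGroup H] [InnerProductSpace ℝ H]
    [CompleteSpace H] (T : H →L[ℝ] H) (hT_pos : ∀ x : H, 0 ≤ (inner ℝ (T x) x : ℝ))
    {ρ : ℝ} (hρ : 0 ≤ ρ) : IsUnit ((1 : H →L[ℝ] H) + ρ • T) := by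
  set A : H →L[ℝ] H := (1 : H →L[ℝ] H) + ρ • T with hA
  have hB : IsCoercive ((innerSL ℝ).comp A) := by
    refine ⟨1, one_pos, fun u => ?_⟩
    simp only [ContinuousLinearMap.comp_apply, innerSL_apply_apply, hA,
      ContinuousLinearMap.add_apply, ContinuousLinearMap.one_apply,
      ContinuousLinearMap.smul_apply, inner_add_left, inner_smul_left,
      starRingEnd_apply, star_trivial]
    have := hT_pos u
    nlinarith [real_inner_self_eq_norm_mul_norm u, real_inner_comm (T u) u]
  have hEq : (hB.continuousLinearEquivOfBilin : H →L[ℝ] H) = A := by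
    ext v
    refine ext_inner_right ℝ fun w => ?_
    have h2 := hB.continuousLinearEquivOfBilin_apply v w
    simpa using h2
  have : IsUnit (hB.continuousLinearEquivOfBilin : H →L[ℝ] H) :=
    ⟨hB.continuousLinearEquivOfBilin.toUnit, rfl⟩
  rwa [hEq] at this

/-- For a compact positive self-adjoint operator `T` on a (separable) Hilbert
space, `(Id + ρT)⁻¹ ψ` converges, as `ρ → ∞`, to the orthogonal projection of `ψ` onto
`ker T`. -/
theorem penalized_resolvent_tendsto_kernel_projection
    {H : Type*} [NormedAddCommGroup H] [InnerProductSpace ℝ H] [CompleteSpace H]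
    [TopologicalSpace.SeparableSpace H]
    (T : H →L[ℝ] H) (hT_cpt : IsCompactOperator T) (hT_sa : IsSelfAdjoint T)
    (hT_pos : ∀ x : H, 0 ≤ (inner ℝ (T x) x : ℝ)) (ψ : H) :
    Filter.Tendsto
      (fun ρ : ℝ => Ring.inverse ((1 : H →L[ℝ] H) + ρ • T) ψ)
      Filter.atTop
      (nhds ((Submodule.orthogonalProjectionOnto (LinearMap.ker (T : H →ₗ[ℝ] H)) ψ : LinearMap.ker (T : H →ₗ[ℝ] H)) : H)) := by
  set A : ℝ → (H →L[ℝ] H) := fun ρ => (1 : H →L[ℝ] H) + ρ • T with hA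
  set G : ℝ → (H →L[ℝ] H) := fun ρ => Ring.inverse (A ρ) with hG
  set P : H := ((Submodule.orthogonalProjectionOnto (LinearMap.ker (T : H →ₗ[ℝ] H)) ψ : LinearMap.ker (T : H →ₗ[ℝ] H)) : H) with hP
  have hU : ∀ {ρ : ℝ}, 0 ≤ ρ → IsUnit (A ρ) := fun hρ => aux_isUnit T hT_pos hρ
  -- G ρ is a right and left inverse of A ρ
  have hGA : ∀ {ρ : ℝ}, 0 ≤ ρ → ∀ x, G ρ (A ρ x) = x := by
    intro ρ hρ x
    have := Ring.inverse_mul_cancel (A ρ) (hU hρ)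
    calc G ρ (A ρ x) = (Ring.inverse (A ρ) * A ρ) x := rfl
    _ = x := by rw [this]; rfl
  have hAG : ∀ {ρ : ℝ}, 0 ≤ ρ → ∀ x, A ρ (G ρ x) = x := by
    intro ρ hρ x
    have := Ring.mul_inverse_cancel (A ρ) (hU hρ)
    calc A ρ (G ρ x) = (A ρ * Ring.inverse (A ρ)) x := rfl
    _ = x := by rw [this]; rfl
  -- norm bound ‖G ρ y‖ ≤ ‖y‖
  have hGnorm : ∀ {ρ : ℝ}, 0 ≤ ρ → ∀ y, ‖G ρ y‖ ≤ ‖y‖ := by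
    intro ρ hρ y
    set x := G ρ y with hx
    have hAx : A ρ x = y := hAG hρ y
    have h1 : ‖x‖ * ‖x‖ ≤ ⟪A ρ x, x⟫ := by
      simp only [hA, ContinuousLinearMap.add_apply, ContinuousLinearMap.one_apply,
        ContinuousLinearMap.smul_apply, inner_add_left, inner_smul_left,
        starRingEnd_apply, star_trivial]
      have := hT_pos x
      nlinarith [real_inner_self_eq_norm_mul_norm x]
    rw [hAx] at h1
    have h2 : ⟪y, x⟫ ≤ ‖y‖ * ‖x‖ := real_inner_le_norm y x
    rcases eq_or_lt_of_le (norm_nonneg x) with h0 | h0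
    · rw [← h0]; exact norm_nonneg y
    · exact le_of_mul_le_mul_right (h1.trans h2) h0
  -- ker T = (range T)ᗮ
  have hsym := hT_sa.isSymmetric
  have hker : (LinearMap.ker (T : H →ₗ[ℝ] H) : Submodule ℝ H) = (LinearMap.range (T : H →ₗ[ℝ] H))ᗮ := by
    ext x
    simp only [LinearMap.mem_ker, Submodule.mem_orthogonal]
    constructor
    · rintro hx u ⟨y, rfl⟩
      have : ⟪T y, x⟫ = ⟪y, T x⟫ := hsym y x
      simp only [ContinuousLinearMap.coe_coe] at this ⊢
      rw [this, show T x = 0 from hx, inner_zero_right]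
    · intro h
      have : ⟪T x, T x⟫ = 0 := by
        have h1 := h (T (T x)) ⟨T x, rfl⟩
        have h2 : ⟪T (T x), x⟫ = ⟪T x, T x⟫ := hsym (T x) x
        rw [h2] at h1
        exact h1
      exact inner_self_eq_zero.mp this
  -- ψ - P ∈ closure of range T
  have hmem : ψ - P ∈ closure ((LinearMap.range (T : H →ₗ[ℝ] H)) : Set H) := by
    have h1 : ψ - P ∈ (LinearMap.ker (T : H →ₗ[ℝ] H) : Submodule ℝ H)ᗮ :=
      (LinearMap.ker (T : H →ₗ[ℝ] H) : Submodule ℝ H).sub_starProjection_mem_orthogonal ψ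
    rw [hker, Submodule.orthogonal_orthogonal_eq_closure] at h1
    exact h1
  -- T P = 0, so A ρ P = P, so G ρ P = P
  have hTP : T P = 0 := (Submodule.orthogonalProjectionOnto (LinearMap.ker (T : H →ₗ[ℝ] H)) ψ).2
  have hGP : ∀ {ρ : ℝ}, 0 ≤ ρ → G ρ P = P := by
    intro ρ hρ
    have hAP : A ρ P = P := by
      simp [hA, hTP]
    conv_lhs => rw [← hAP]
    exact hGA hρ P
  rw [Metric.tendsto_atTop]
  intro ε hε
  obtain ⟨z, hz_mem, hz⟩ := Metric.mem_closure_iff.mp hmem (ε / 2) (by linarith)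
  obtain ⟨w, rfl⟩ := hz_mem
  refine ⟨max 1 (4 * ‖w‖ / ε), fun ρ hρ => ?_⟩
  have hρ1 : (1 : ℝ) ≤ ρ := le_trans (le_max_left _ _) hρ
  have hρ0 : (0 : ℝ) < ρ := by linarith
  have hρw : 4 * ‖w‖ / ε ≤ ρ := le_trans (le_max_right _ _) hρ
  -- decomposition
  have hsplit : G ρ ψ - P = G ρ (ψ - P - T w) + ρ⁻¹ • (w - G ρ w) := by
    have e1 : G ρ ψ - P = G ρ (ψ - P) := by
      rw [map_sub, hGP hρ0.le]
    have e2 : T w = ρ⁻¹ • (A ρ w - w) := by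
      simp only [hA, ContinuousLinearMap.add_apply, ContinuousLinearMap.one_apply,
        ContinuousLinearMap.smul_apply]
      rw [add_sub_cancel_left, smul_smul, inv_mul_cancel₀ hρ0.ne', one_smul]
    have e3 : G ρ (T w) = ρ⁻¹ • (w - G ρ w) := by
      rw [e2, map_smul, map_sub, hGA hρ0.le, smul_sub]
    calc G ρ ψ - P = G ρ (ψ - P) := e1
    _ = G ρ (ψ - P - T w) + G ρ (T w) := by rw [← map_add, sub_add_cancel]
    _ = G ρ (ψ - P - T w) + ρ⁻¹ • (w - G ρ w) := by rw [e3]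
  rw [dist_eq_norm, hsplit]
  have b1 : ‖G ρ (ψ - P - T w)‖ < ε / 2 := by
    have := hGnorm hρ0.le (ψ - P - T w)
    have hd : ‖ψ - P - T w‖ < ε / 2 := by
      rw [← dist_eq_norm] at *
      simpa using hz
    linarith
  have b2 : ‖ρ⁻¹ • (w - G ρ w)‖ ≤ ε / 2 := by
    rw [norm_smul, norm_inv, Real.norm_eq_abs, abs_of_pos hρ0]
    have h1 : ‖w - G ρ w‖ ≤ 2 * ‖w‖ :=
      (norm_sub_le _ _).trans (by have := hGnorm hρ0.le w; linarith)
    have h2 : 4 * ‖w‖ ≤ ε * ρ := by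
      rw [div_le_iff₀ hε] at hρw
      linarith
    rw [inv_mul_le_iff₀ hρ0]
    nlinarith [norm_nonneg w, norm_nonneg (w - G ρ w)]
  calc ‖G ρ (ψ - P - T w) + ρ⁻¹ • (w - G ρ w)‖
      ≤ ‖G ρ (ψ - P - T w)‖ + ‖ρ⁻¹ • (w - G ρ w)‖ := norm_add_le _ _
    _ < ε := by linarith
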